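/- Let N be a positive integer and let x_1, ..., x_N be nonnegative real numbers in non-decreasing order (x_1 ≤ x_2 ≤ ... ≤ x_N). For any real exponents β_2 > β_1 > 0 and every k with 1 ≤ k ≤ N, the cross-product inequality holds: (Σ_{i=1}^k x_i^{β_2}) · (Σ_{j=1}^N x_j^{β_1}) ≤ (Σ_{i=1}^k x_i^{β_1}) · (Σ_{j=1}^N x_j^{β_2}). -/

import Mathlib

/-- Key pointwise inequality: for `0 ≤ a ≤ b` and `0 < β₁ < β₂`,
`a ^ β₂ * b ^ β₁ ≤ a ^ β₁ * b ^ β₂`. -/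
lemma rpow_cross_le {a b β₁ β₂ : ℝ} (ha : 0 ≤ a) (hab : a ≤ b)
    (hβ₁ : 0 < β₁) (hβ : β₁ < β₂) :
    a ^ β₂ * b ^ β₁ ≤ a ^ β₁ * b ^ β₂ := by
  have hb : 0 ≤ b := ha.trans hab
  have hδ : 0 < β₂ - β₁ := by linarith
  have hne : β₁ + (β₂ - β₁) ≠ 0 := by
    rw [add_sub_cancel]; exact ne_of_gt (hβ₁.trans hβ)
  have ha2 : a ^ β₂ = a ^ β₁ * a ^ (β₂ - β₁) := by
    rw [← Real.rpow_add' ha hne, add_sub_cancel]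
  have hb2 : b ^ β₂ = b ^ β₁ * b ^ (β₂ - β₁) := by
    rw [← Real.rpow_add' hb hne, add_sub_cancel]
  rw [ha2, hb2]
  have h1 : a ^ (β₂ - β₁) ≤ b ^ (β₂ - β₁) := Real.rpow_le_rpow ha hab hδ.le
  have h2 : (0:ℝ) ≤ a ^ β₁ := Real.rpow_nonneg ha _
  have h3 : (0:ℝ) ≤ b ^ β₁ := Real.rpow_nonneg hb _
  have h4 : (0:ℝ) ≤ a ^ (β₂ - β₁) := Real.rpow_nonneg ha _
  calc a ^ β₁ * a ^ (β₂ - β₁) * b ^ β₁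
      = a ^ β₁ * (a ^ (β₂ - β₁) * b ^ β₁) := by ring
    _ ≤ a ^ β₁ * (b ^ β₁ * b ^ (β₂ - β₁)) := by
        apply mul_le_mul_of_nonneg_left _ h2
        rw [mul_comm (b ^ β₁)]
        exact mul_le_mul_of_nonneg_right h1 h3

/-- **Cross-product inequality for power sums of a sorted nonnegative vector.**
If `0 ≤ x 0 ≤ x 1 ≤ ⋯ ≤ x (N-1)`, then for real exponents `β₂ > β₁ > 0` and
every `1 ≤ k ≤ N`,
`(∑_{i<k} x i ^ β₂) * (∑_{j<N} x j ^ β₁) ≤ (∑_{i<k} x i ^ β₁) * (∑_{j<N} x j ^ β₂)`. -/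
theorem powerSum_cross_product_inequality
    (N : ℕ) (hN : 0 < N) (x : ℕ → ℝ)
    (hnonneg : ∀ i, i < N → 0 ≤ x i)
    (hmono : ∀ i j, i ≤ j → j < N → x i ≤ x j)
    (β₁ β₂ : ℝ) (hβ₁ : 0 < β₁) (hβ : β₁ < β₂)
    (k : ℕ) (hk1 : 1 ≤ k) (hkN : k ≤ N) :
    (∑ i ∈ Finset.range k, x i ^ β₂) * (∑ j ∈ Finset.range N, x j ^ β₁)
      ≤ (∑ i ∈ Finset.range k, x i ^ β₁) * (∑ j ∈ Finset.range N, x j ^ β₂) := by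
  have hsplit : ∀ β : ℝ, (∑ j ∈ Finset.range N, x j ^ β)
      = (∑ j ∈ Finset.range k, x j ^ β) + ∑ j ∈ Finset.Ico k N, x j ^ β := by
    intro β
    rw [Finset.range_eq_Ico, ← Finset.sum_Ico_consecutive _ (Nat.zero_le k) hkN, Finset.range_eq_Ico]
  rw [hsplit β₁, hsplit β₂, mul_add, mul_add]
  have hkey : (∑ i ∈ Finset.range k, x i ^ β₂) * (∑ j ∈ Finset.Ico k N, x j ^ β₁)
      ≤ (∑ i ∈ Finset.range k, x i ^ β₁) * (∑ j ∈ Finset.Ico k N, x j ^ β₂) := by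
    rw [Finset.sum_mul_sum, Finset.sum_mul_sum]
    apply Finset.sum_le_sum
    intro i hi
    apply Finset.sum_le_sum
    intro j hj
    rw [Finset.mem_range] at hi
    rw [Finset.mem_Ico] at hj
    exact rpow_cross_le (hnonneg i (lt_of_lt_of_le hi hkN))
      (hmono i j (le_trans hi.le hj.1) hj.2) hβ₁ hβ
  nlinarith [hkey, mul_comm (∑ i ∈ Finset.range k, x i ^ β₂) (∑ j ∈ Finset.range k, x j ^ β₁)]
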